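/- Invariance of the value-iteration iterates for a group-invariant POMDP: define Q_0 := 0 and Q_{n+1} := B Q_n for n ∈ ℕ. Then for every n ∈ ℕ, g ∈ G, h ∈ H, and a ∈ A, one has Q_n(g•h, g•a) = Q_n(h, a). -/

import Mathlib

open scoped NNReal

/-- A group-invariant POMDP over finite types of states `S`, actions `A`,
and observations `Ω`, with a group `G` acting on each. -/
structure GIPOMDP (G S A Ω : Type) [Group G] [MulAction G S] [MulAction G A] [MulAction G Ω]
    [Fintype S] [Fintype A] [Fintype Ω] where
  b0 : S → ℝ≥0
  T : S → A → S → ℝ≥0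
  R : S → A → ℝ
  O0 : S → Ω → ℝ≥0
  O : A → S → Ω → ℝ≥0
  b0_sum : ∑ s, b0 s = 1
  b0_inv : ∀ (g : G) (s : S), b0 (g • s) = b0 s
  T_sum : ∀ (s : S) (a : A), ∑ s', T s a s' = 1
  T_inv : ∀ (g : G) (s : S) (a : A) (s' : S), T (g • s) (g • a) (g • s') = T s a s'
  R_inv : ∀ (g : G) (s : S) (a : A), R (g • s) (g • a) = R s a
  O0_sum : ∀ s : S, ∑ o, O0 s o = 1
  O0_inv : ∀ (g : G) (s : S) (o : Ω), O0 (g • s) (g • o) = O0 s o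
  O_sum : ∀ (a : A) (s' : S), ∑ o, O a s' o = 1
  O_inv : ∀ (g : G) (a : A) (s' : S) (o : Ω), O (g • a) (g • s') (g • o) = O a s' o

/-- A history: an initial observation followed by a list of action–observation pairs. -/
abbrev Hist (A Ω : Type) : Type := Ω × List (A × Ω)

variable {G S A Ω : Type} [Group G] [MulAction G S] [MulAction G A] [MulAction G Ω]
  [Fintype S] [Fintype A] [Fintype Ω]

/-- Componentwise group action on histories. -/
def histAct (g : G) (h : Hist A Ω) : Hist A Ω :=
  (g • h.1, h.2.map fun p => (g • p.1, g • p.2))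

/-- Appending an action–observation pair to a history: `h·(a,o)`. -/
def snocH (h : Hist A Ω) (a : A) (o : Ω) : Hist A Ω :=
  (h.1, h.2 ++ [(a, o)])

/-- Unnormalized filter weight, by recursion on the reversed action–observation list. -/
noncomputable def wRev (P : GIPOMDP G S A Ω) (o0 : Ω) : List (A × Ω) → S → ℝ≥0
  | [] => fun s => P.b0 s * P.O0 s o0
  | (a, o) :: rest => fun s' => (∑ s, wRev P o0 rest s * P.T s a s') * P.O a s' o

/-- Unnormalized filter weight `w_h(s)`: `w_{(o0,[])}(s) = b0(s)·O0(s,o0)` and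
`w_{h·(a,o)}(s') = (Σ_s w_h(s)·T(s,a,s'))·O(a,s',o)`. -/
noncomputable def w (P : GIPOMDP G S A Ω) (h : Hist A Ω) (s : S) : ℝ≥0 :=
  wRev P h.1 h.2.reverse s

/-- Belief `Pr(s|h)`, with the convention that it is `0` when the weights sum to `0`. -/
noncomputable def belief (P : GIPOMDP G S A Ω) (h : Hist A Ω) (s : S) : ℝ≥0 :=
  if 0 < ∑ s', w P h s' then w P h s / ∑ s', w P h s' else 0

/-- Conditional observation probability `Pr(o|h,a) = Σ_s Pr(s|h)·Σ_{s'} T(s,a,s')·O(a,s',o)`. -/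
noncomputable def probObs (P : GIPOMDP G S A Ω) (h : Hist A Ω) (a : A) (o : Ω) : ℝ≥0 :=
  ∑ s, belief P h s * ∑ s', P.T s a s' * P.O a s' o

open Classical in
/-- History-MDP transition function: `T̄(h,a,h') = Pr(o|h,a)` if `h' = h·(a,o)` for some `o`,
and `0` otherwise. -/
noncomputable def Tbar (P : GIPOMDP G S A Ω) (h : Hist A Ω) (a : A) (h' : Hist A Ω) : ℝ≥0 :=
  ∑ o, if h' = snocH h a o then probObs P h a o else 0

/-- History-MDP reward function `R̄(h,a) = Σ_s Pr(s|h)·R(s,a)`. -/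
noncomputable def Rbar (P : GIPOMDP G S A Ω) (h : Hist A Ω) (a : A) : ℝ :=
  ∑ s, (belief P h s : ℝ) * P.R s a

/-- Bellman optimality operator of the History-MDP:
`(BQ)(h,a) = R̄(h,a) + γ·Σ_o Pr(o|h,a)·max_{a'} Q(h·(a,o), a')`. -/
noncomputable def bellman [Nonempty A] (P : GIPOMDP G S A Ω) (γ : ℝ)
    (Q : Hist A Ω × A → ℝ) : Hist A Ω × A → ℝ :=
  fun x => Rbar P x.1 x.2 + γ * ∑ o, (probObs P x.1 x.2 o : ℝ) *
    Finset.univ.sup' Finset.univ_nonempty (fun a' => Q (snocH x.1 x.2 o, a'))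

/-- Value-iteration iterates: `Q_0 = 0` and `Q_{n+1} = B Q_n`. -/
noncomputable def qIter [Nonempty A] (P : GIPOMDP G S A Ω) (γ : ℝ) :
    ℕ → (Hist A Ω × A → ℝ)
  | 0 => 0
  | n + 1 => bellman P γ (qIter P γ n)

section Aux

variable [Nonempty S] [Nonempty A] [Nonempty Ω]

lemma sum_smul_reindex {M : Type*} [AddCommMonoid M] (g : G) (f : S → M) :
    ∑ s, f (g • s) = ∑ s, f s :=
  Fintype.sum_equiv (MulAction.toPerm g) _ _ (fun _ => rfl)

lemma wRev_inv (P : GIPOMDP G S A Ω) (g : G) (o0 : Ω) (l : List (A × Ω)) (s : S) :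
    wRev P (g • o0) (l.map fun p => (g • p.1, g • p.2)) (g • s) = wRev P o0 l s := by
  induction l generalizing s with
  | nil => simp [wRev, P.b0_inv, P.O0_inv]
  | cons p rest ih =>
    obtain ⟨a, o⟩ := p
    simp only [List.map_cons, wRev, P.O_inv]
    congr 1
    rw [← sum_smul_reindex (g := g) (f := fun t => wRev P (g • o0)
      (rest.map fun p => (g • p.1, g • p.2)) t * P.T t (g • a) (g • s))]
    exact Finset.sum_congr rfl fun t _ => by rw [ih, P.T_inv]

lemma w_inv (P : GIPOMDP G S A Ω) (g : G) (h : Hist A Ω) (s : S) :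
    w P (histAct g h) (g • s) = w P h s := by
  simp only [w, histAct, ← List.map_reverse]
  exact wRev_inv P g h.1 h.2.reverse s

lemma belief_inv (P : GIPOMDP G S A Ω) (g : G) (h : Hist A Ω) (s : S) :
    belief P (histAct g h) (g • s) = belief P h s := by
  have hsum : ∑ s', w P (histAct g h) s' = ∑ s', w P h s' := by
    rw [← sum_smul_reindex (g := g) (f := fun s' => w P (histAct g h) s')]
    exact Finset.sum_congr rfl fun t _ => w_inv P g h t
  simp [belief, hsum, w_inv]

lemma probObs_inv (P : GIPOMDP G S A Ω) (g : G) (h : Hist A Ω) (a : A) (o : Ω) :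
    probObs P (histAct g h) (g • a) (g • o) = probObs P h a o := by
  unfold probObs
  rw [← sum_smul_reindex (g := g) (f := fun s => belief P (histAct g h) s *
    ∑ s', P.T s (g • a) s' * P.O (g • a) s' (g • o))]
  refine Finset.sum_congr rfl fun s _ => ?_
  rw [belief_inv]
  congr 1
  rw [← sum_smul_reindex (g := g) (f := fun s' => P.T (g • s) (g • a) s' *
    P.O (g • a) s' (g • o))]
  exact Finset.sum_congr rfl fun s' _ => by rw [P.T_inv, P.O_inv]

lemma Rbar_inv (P : GIPOMDP G S A Ω) (g : G) (h : Hist A Ω) (a : A) :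
    Rbar P (histAct g h) (g • a) = Rbar P h a := by
  unfold Rbar
  rw [← sum_smul_reindex (g := g) (f := fun s => (belief P (histAct g h) s : ℝ) *
    P.R s (g • a))]
  exact Finset.sum_congr rfl fun s _ => by rw [belief_inv, P.R_inv]

lemma sup'_smul_reindex (g : G) (f : A → ℝ) :
    (Finset.univ.sup' Finset.univ_nonempty fun a => f (g • a)) =
      Finset.univ.sup' Finset.univ_nonempty f := by
  apply le_antisymm
  · exact Finset.sup'_le _ _ fun b _ => Finset.le_sup' f (Finset.mem_univ (g • b))
  · refine Finset.sup'_le _ _ fun b _ => ?_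
    have : f b = f (g • g⁻¹ • b) := by rw [smul_inv_smul]
    rw [this]
    exact Finset.le_sup' (fun a => f (g • a)) (Finset.mem_univ (g⁻¹ • b))

lemma histAct_snocH (g : G) (h : Hist A Ω) (a : A) (o : Ω) :
    histAct g (snocH h a o) = snocH (histAct g h) (g • a) (g • o) := by
  simp [histAct, snocH]

end Aux

/-- Invariance of the value-iteration iterates for a group-invariant POMDP:
Q_n(g•h, g•a) = Q_n(h, a) for every n. -/
theorem qIter_invariant {G S A Ω : Type} [Group G] [MulAction G S] [MulAction G A] [MulAction G Ω]
    [Fintype S] [Fintype A] [Fintype Ω] [Nonempty S] [Nonempty A] [Nonempty Ω]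
    (P : GIPOMDP G S A Ω)
    (γ : ℝ) (hγ0 : 0 ≤ γ) (hγ1 : γ < 1) :
    ∀ (n : ℕ) (g : G) (h : Hist A Ω) (a : A),
      qIter P γ n (histAct g h, g • a) = qIter P γ n (h, a) := by
  intro n
  induction n with
  | zero => intro g h a; rfl
  | succ n ih =>
    intro g h a
    show bellman P γ (qIter P γ n) (histAct g h, g • a) =
      bellman P γ (qIter P γ n) (h, a)
    unfold bellman
    rw [Rbar_inv]
    congr 1
    congr 1
    rw [← sum_smul_reindex (g := g) (f := fun o => (probObs P (histAct g h) (g • a) o : ℝ) *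
      Finset.univ.sup' Finset.univ_nonempty
        (fun a' => qIter P γ n (snocH (histAct g h) (g • a) o, a')))]
    refine Finset.sum_congr rfl fun o _ => ?_
    rw [probObs_inv]
    congr 1
    rw [← sup'_smul_reindex (g := g)
      (f := fun a' => qIter P γ n (snocH (histAct g h) (g • a) (g • o), a'))]
    refine Finset.sup'_congr _ rfl fun a' _ => ?_
    rw [← histAct_snocH, ih]
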